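/- In a finite bipolar argumentation framework (A, R, Rs) with the weak-support semantics, a set S ⊆ A is a standard complete set if and only if there exists a standard complete labelling λ : A → {+,-,?} such that S = {a ∈ A | λ(a) = +}. -/
import Mathlib


inductive Lab : Type
  | plus | minus | quest
deriving DecidableEq

section
variable {A : Type*} (R Rs : A → A → Prop)

def ConflictFree (S : Set A) : Prop := ∀ a ∈ S, ∀ b ∈ S, ¬ R a b

/-- S defends a iff every attacker of a is attacked by S and not supported by S. -/
def DefendsB (S : Set A) (a : A) : Prop :=
  ∀ b, R b a → (∃ c ∈ S, R c b) ∧ ¬ ∃ c ∈ S, Rs c b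

/-- S is a standard complete set iff it is conflict-free and contains
exactly the arguments it defends. -/
def StdCompleteSet (S : Set A) : Prop :=
  ConflictFree R S ∧ ∀ a, a ∈ S ↔ DefendsB R Rs S a

def StdCompleteLab (lab : A → Lab) : Prop :=
  ∀ a, (lab a = Lab.plus ↔ ∀ b, R b a → lab b = Lab.minus) ∧
       (lab a = Lab.minus ↔
         ((∃ b, R b a ∧ lab b = Lab.plus) ∧ ¬ ∃ c, Rs c a ∧ lab c = Lab.plus))

end

open Classical in
noncomputable def mkLab {A : Type*} (R Rs : A → A → Prop) (S : Set A) (a : A) : Lab :=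
  if a ∈ S then Lab.plus
  else if (∃ b ∈ S, R b a) ∧ ¬ ∃ c ∈ S, Rs c a then Lab.minus
  else Lab.quest

lemma mkLab_plus_iff {A : Type*} (R Rs : A → A → Prop) (S : Set A) (a : A) :
    mkLab R Rs S a = Lab.plus ↔ a ∈ S := by
  unfold mkLab
  split_ifs with h1 h2 <;> simp_all

lemma mkLab_minus_iff {A : Type*} (R Rs : A → A → Prop) (S : Set A) (a : A) :
    mkLab R Rs S a = Lab.minus ↔
      a ∉ S ∧ (∃ b ∈ S, R b a) ∧ ¬ ∃ c ∈ S, Rs c a := by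
  unfold mkLab
  split_ifs with h1 h2 <;> simp_all <;> exact h2

theorem std_complete_set_iff_labelling {A : Type*} [Fintype A]
    (R Rs : A → A → Prop) (S : Set A) :
    StdCompleteSet R Rs S ↔
      ∃ lab : A → Lab, StdCompleteLab R Rs lab ∧ S = {a | lab a = Lab.plus} := by
  classical
  constructor
  · rintro ⟨hcf, hdef⟩
    refine ⟨mkLab R Rs S, ?_, ?_⟩
    · intro a
      constructor
      · constructor
        · intro ha b hb
          rw [mkLab_plus_iff] at ha
          rw [mkLab_minus_iff]
          refine ⟨fun hbS => hcf b hbS a ha hb, ((hdef a).1 ha b hb)⟩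
        · intro h
          rw [mkLab_plus_iff, hdef a]
          intro b hb
          have := h b hb
          rw [mkLab_minus_iff] at this
          exact this.2
      · rw [mkLab_minus_iff]
        constructor
        · rintro ⟨-, ⟨b, hbS, hba⟩, hn⟩
          refine ⟨⟨b, hba, (mkLab_plus_iff R Rs S b).2 hbS⟩, ?_⟩
          rintro ⟨c, hc, hcp⟩
          exact hn ⟨c, (mkLab_plus_iff R Rs S c).1 hcp, hc⟩
        · rintro ⟨⟨b, hba, hbp⟩, hn⟩
          rw [mkLab_plus_iff] at hbp
          refine ⟨fun haS => hcf b hbp a haS hba, ⟨b, hbp, hba⟩, ?_⟩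
          rintro ⟨c, hcS, hc⟩
          exact hn ⟨c, hc, (mkLab_plus_iff R Rs S c).2 hcS⟩
    · ext a; simp [mkLab_plus_iff]
  · rintro ⟨lab, hlab, rfl⟩
    constructor
    · intro a ha b hb hab
      have : lab a = Lab.minus := (hlab b).1.1 hb a hab
      rw [ha] at this; exact Lab.noConfusion this
    · intro a
      rw [Set.mem_setOf_eq, (hlab a).1]
      constructor
      · intro h b hb
        have := (hlab b).2.1 (h b hb)
        obtain ⟨⟨c, hc1, hc2⟩, hn⟩ := this
        refine ⟨⟨c, hc2, hc1⟩, ?_⟩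
        rintro ⟨c, hcp, hc⟩
        exact hn ⟨c, hc, hcp⟩
      · intro h b hb
        obtain ⟨⟨c, hc2, hc1⟩, hn⟩ := h b hb
        refine (hlab b).2.2 ⟨⟨c, hc1, hc2⟩, ?_⟩
        rintro ⟨c, hc, hcp⟩
        exact hn ⟨c, hcp, hc⟩
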